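/- The unique formal power series η(t) with constant term 1 satisfying t·η(t)³ = η(t) − 1 has n-th coefficient equal to (1/n)·binom(3n, n−1) for all n ≥ 1. -/

import Mathlib

open PowerSeries

private lemma aux_choose_ratio (j : ℕ) :
    (2*((j:ℚ)+1)*(2*(j:ℚ)+5)) * ((3*j+6).choose (j+1) : ℚ)
      = (3*(3*(j:ℚ)+4)*(3*(j:ℚ)+5)) * ((3*j+3).choose j : ℚ) := by
  rw [Nat.cast_choose ℚ (by omega : j+1 ≤ 3*j+6), Nat.cast_choose ℚ (by omega : j ≤ 3*j+3),
      show 3*j+6 - (j+1) = 2*j+5 by omega, show 3*j+3 - j = 2*j+3 by omega]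
  have f1 : ((3*j+6).factorial : ℚ)
      = ((3*j+6):ℚ)*((3*j+5):ℚ)*((3*j+4):ℚ)*((3*j+3).factorial : ℚ) := by
    rw [show 3*j+6 = ((3*j+3)+1+1)+1 by omega, Nat.factorial_succ, Nat.factorial_succ,
      Nat.factorial_succ]
    push_cast; ring
  have f2 : ((2*j+5).factorial : ℚ) = ((2*j+5):ℚ)*((2*j+4):ℚ)*((2*j+3).factorial : ℚ) := by
    rw [show 2*j+5 = ((2*j+3)+1)+1 by omega, Nat.factorial_succ, Nat.factorial_succ]
    push_cast; ring
  have f3 : ((j+1).factorial : ℚ) = ((j:ℚ)+1)*(j.factorial : ℚ) := by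
    rw [Nat.factorial_succ]; push_cast; ring
  rw [f1, f2, f3]
  have n1 : ((j.factorial : ℚ)) ≠ 0 := Nat.cast_ne_zero.mpr (Nat.factorial_ne_zero _)
  have n2 : (((2*j+3).factorial : ℚ)) ≠ 0 := Nat.cast_ne_zero.mpr (Nat.factorial_ne_zero _)
  have n3 : ((j:ℚ)+1) ≠ 0 := by positivity
  have n4 : ((2*(j:ℚ))+5) ≠ 0 := by positivity
  have n5 : ((2*(j:ℚ))+4) ≠ 0 := by positivity
  field_simp
  push_cast
  ring

/-- The formal power series `η` with constant term 1 satisfying `t·η³ = η − 1`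
has `n`-th coefficient `(1/n)·binom(3n, n−1)` for all `n ≥ 1`. -/
theorem ternary_tree_coeff (η : PowerSeries ℚ)
    (hη0 : PowerSeries.coeff 0 η = 1)
    (hη : PowerSeries.X * η ^ 3 = η - 1) :
    ∀ n : ℕ, 1 ≤ n →
      PowerSeries.coeff n η = (Nat.choose (3 * n) (n - 1) : ℚ) / n := by
  set η' := d⁄dX ℚ η with hη'd
  set η'' := d⁄dX ℚ η' with hη''d
  have h2 : X * (η ^ 2 * η') + X * (η ^ 2 * η') + X * (η ^ 2 * η') + η ^ 3 = η' := by
    have h := congrArg (fun f => d⁄dX ℚ f) hη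
    simp only [Derivation.leibniz, Derivation.leibniz_pow, PowerSeries.derivative_X,
      map_sub, Derivation.map_one_eq_zero, smul_eq_mul, nsmul_eq_mul, ← hη'd] at h
    norm_num at h
    linear_combination h
  have h3 : 6*η^2*η' + 6*X*η*η'^2 + 3*X*η^2*η'' = η'' := by
    have h := congrArg (fun f => d⁄dX ℚ f) h2
    simp only [Derivation.leibniz, Derivation.leibniz_pow, PowerSeries.derivative_X,
      map_add, smul_eq_mul, nsmul_eq_mul, ← hη'd, ← hη''d] at h
    norm_num at h
    linear_combination h
  have L1 : (3 - 2*η) * η' = η^4 := by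
    linear_combination (3*η') * hη - η * h2
  have L2 : η * (3 - 2*η) * η'' = 6*(η - 1)*η'^2 + 6*η^4*η' := by
    linear_combination (-(η^2)) * h3 + (3*η*η'' + 6*η'^2) * hη
  have L3 : η * (3 - 2*η)^3 * η'' = 6*η^8*(2 - η) := by
    linear_combination (3 - 2*η)^2 * L2
      + (6*(η - 1)*((3 - 2*η)*η' + η^4) + 6*η^4*(3 - 2*η)) * L1
  have L4 : η * (3 - 2*η)^3 *
      ((4*X - 27*X^2) * η'' + (6 - 54*X) * η' - 6*η) = 0 := by
    linear_combination (4*X - 27*X^2) * L3 + ((6 - 54*X)*η*(3 - 2*η)^2) * L1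
      + (24*(2 - η)*η^5 - 162*(2 - η)*(η^2*(η - 1) + X*η^5)
          - 54*(3 - 2*η)^2*η^2) * hη
  have hc : PowerSeries.constantCoeff η = 1 := by
    rw [← PowerSeries.coeff_zero_eq_constantCoeff]; exact hη0
  have hu : (η * (3 - 2*η)^3 : ℚ⟦X⟧) ≠ 0 := by
    intro h
    have := congrArg (PowerSeries.constantCoeff (R := ℚ)) h
    simp only [map_mul, map_pow, map_sub, map_ofNat, map_zero, hc] at this
    norm_num at this
  have E : (4*X - 27*X^2) * η'' + (6 - 54*X) * η' - 6*η = 0 := by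
    rcases mul_eq_zero.1 L4 with h | h
    · exact absurd h hu
    · exact h
  have Emul : X*(PowerSeries.C (R := ℚ) 4 * η'') + PowerSeries.C (R := ℚ) 6 * η' =
      X*(X*(PowerSeries.C (R := ℚ) 27 * η'')) + X*(PowerSeries.C (R := ℚ) 54 * η')
        + PowerSeries.C (R := ℚ) 6 * η := by
    have hC4 : (PowerSeries.C (R := ℚ) 4 : ℚ⟦X⟧) = 4 := map_ofNat _ 4
    have hC6 : (PowerSeries.C (R := ℚ) 6 : ℚ⟦X⟧) = 6 := map_ofNat _ 6
    have hC27 : (PowerSeries.C (R := ℚ) 27 : ℚ⟦X⟧) = 27 := map_ofNat _ 27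
    have hC54 : (PowerSeries.C (R := ℚ) 54 : ℚ⟦X⟧) = 54 := map_ofNat _ 54
    linear_combination (X*η'')*hC4 + η'*hC6 - (X*(X*η''))*hC27 - (X*η')*hC54 - η*hC6 + E
  have cη' : ∀ n : ℕ, PowerSeries.coeff n η'
      = PowerSeries.coeff (n+1) η * ((n:ℚ)+1) := by
    intro n; rw [hη'd, PowerSeries.coeff_derivative]
  have cη'' : ∀ n : ℕ, PowerSeries.coeff n η'' =
      PowerSeries.coeff (n+2) η * (((n:ℚ)+2)*((n:ℚ)+1)) := by
    intro n; rw [hη''d, PowerSeries.coeff_derivative, cη' (n+1)]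
    rw [show n+1+1 = n+2 from rfl]; push_cast; ring
  have rec0 : ∀ k : ℕ, PowerSeries.coeff (k+3) η * (2*((k:ℚ)+3)*(2*(k:ℚ)+7)) =
      PowerSeries.coeff (k+2) η * (3*(3*(k:ℚ)+7)*(3*(k:ℚ)+8)) := by
    intro k
    have hk := congrArg (PowerSeries.coeff (k+1+1)) Emul
    simp only [map_add, PowerSeries.coeff_succ_X_mul, PowerSeries.coeff_C_mul,
      cη', cη''] at hk
    rw [show k+1+2 = k+3 from rfl, show k+1+1 = k+2 from rfl] at hk
    push_cast at hk
    linear_combination hk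
  have a1 : PowerSeries.coeff 1 η = 1 := by
    have h := congrArg (PowerSeries.coeff (0+1)) hη
    rw [PowerSeries.coeff_succ_X_mul, map_sub] at h
    rw [PowerSeries.coeff_zero_eq_constantCoeff, map_pow, hc] at h
    simpa using h.symm
  have a2 : PowerSeries.coeff 2 η = 3 := by
    have hk := congrArg (PowerSeries.coeff (0+1)) Emul
    simp only [map_add, PowerSeries.coeff_succ_X_mul, PowerSeries.coeff_zero_X_mul,
      PowerSeries.coeff_C_mul, cη', cη''] at hk
    rw [show (0:ℕ)+2 = 2 from rfl, show (0:ℕ)+1 = 1 from rfl] at hk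
    rw [a1] at hk
    push_cast at hk
    linarith
  have main : ∀ j : ℕ, PowerSeries.coeff (j+2) η * ((j:ℚ)+2)
      = ((3*j+6).choose (j+1) : ℚ) := by
    intro j
    induction j with
    | zero =>
      rw [show (0:ℕ)+2 = 2 from rfl, a2]
      norm_num
    | succ j ih =>
      have hrec := rec0 j
      have key := aux_choose_ratio (j+1)
      rw [show 3*(j+1)+6 = 3*j+9 by omega, show (j+1)+1 = j+2 from rfl,
        show 3*(j+1)+3 = 3*j+6 by omega] at key
      push_cast at key
      rw [show j+1+2 = j+3 from rfl, show (j+1)+1 = j+2 from rfl,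
        show 3*(j+1)+6 = 3*j+9 by omega]
      push_cast
      have cancel : (2*(2*(j:ℚ)+7)*((j:ℚ)+2)) ≠ 0 := by positivity
      apply mul_left_cancel₀ cancel
      linear_combination ((j:ℚ)+2)*hrec + 3*(3*(j:ℚ)+7)*(3*(j:ℚ)+8)*ih - key
  intro n hn
  match n, hn with
  | 1, _ =>
    rw [a1]
    norm_num
  | (j+2), _ =>
    have h := main j
    have hne : ((j:ℚ)+2) ≠ 0 := by positivity
    rw [show 3*(j+2) = 3*j+6 by omega, show (j+2)-1 = j+1 by omega]
    push_cast
    rw [eq_div_iff (by positivity : ((j:ℚ)+2) ≠ 0)]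
    exact h
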